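/- Segment level decrease along a trajectory: for i < w in [0, m^ℓ), iterating the intermediate-destination map i ↦ x(i,w) reaches w in at most ℓ steps, and the segment levels j(i,w), j(x(i,w),w), j(x(x(i,w),w),w), … form a strictly decreasing sequence. -/

import Mathlib

/-- The `j`-th base-`m` digit of `i`. -/
def digit (m j i : ℕ) : ℕ := (i / m ^ j) % m

/-- The largest base-`m` digit position (below `ℓ`) in which `i` and `w` differ. -/
def topDiff (m ℓ i w : ℕ) : ℕ :=
  Nat.findGreatest (fun j => digit m j i ≠ digit m j w) ℓ

/-- The intermediate destination `x(i, w) = ⌊w / m^{j(i,w)}⌋ · m^{j(i,w)}`. -/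
def interDest (m ℓ i w : ℕ) : ℕ :=
  (w / m ^ topDiff m ℓ i w) * m ^ topDiff m ℓ i w

/-- The trajectory `i_0 = i`, `i_{k+1} = x(i_k, w)` (frozen once it reaches `w`). -/
def traj (m ℓ w i : ℕ) : ℕ → ℕ
  | 0 => i
  | k + 1 => if traj m ℓ w i k < w then interDest m ℓ (traj m ℓ w i k) w
             else traj m ℓ w i k

lemma div_pow_succ (m a k : ℕ) : a / m ^ k = m * (a / m ^ (k + 1)) + digit m k a := by
  rw [digit, pow_succ, ← Nat.div_div_eq_div_mul]
  exact (Nat.div_add_mod _ _).symm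

lemma div_pow_eq_of_digit_eq (m : ℕ) (hm1 : 1 ≤ m) {a b n : ℕ} (ha : a < m ^ n) (hb : b < m ^ n) :
    ∀ k, (∀ t, k ≤ t → digit m t a = digit m t b) → a / m ^ k = b / m ^ k := by
  intro k
  induction' hd : n - k with d ih generalizing k
  · intro _
    have hk : n ≤ k := by omega
    have hle : m ^ n ≤ m ^ k := Nat.pow_le_pow_right hm1 hk
    rw [Nat.div_eq_of_lt (lt_of_lt_of_le ha hle), Nat.div_eq_of_lt (lt_of_lt_of_le hb hle)]
  · intro h
    have h1 : a / m ^ (k + 1) = b / m ^ (k + 1) := ih (k + 1) (by omega) (fun t ht => h t (by omega))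
    rw [div_pow_succ m a k, div_pow_succ m b k, h1, h k le_rfl]

lemma lt_div_add_one_mul (a b : ℕ) (hb : 0 < b) : a < (a / b + 1) * b := by
  have h1 : a / b * b + a % b = a := Nat.div_add_mod' a b
  have h2 : a % b < b := Nat.mod_lt a hb
  have h3 : (a / b + 1) * b = a / b * b + b := by ring
  omega

lemma digit_eq_of_ge (m : ℕ) {a n : ℕ} (ha : a < m ^ n) {t : ℕ} (ht : n ≤ t) (hm : 1 ≤ m) :
    digit m t a = 0 := by
  rw [digit, Nat.div_eq_of_lt (lt_of_lt_of_le ha (Nat.pow_le_pow_right hm ht)), Nat.zero_mod]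

/-- key facts about one step. -/
lemma step_facts (m ℓ i w : ℕ) (hm : 2 ≤ m) (hiw : i < w) (hw : w < m ^ ℓ) :
    i < interDest m ℓ i w ∧ interDest m ℓ i w ≤ w ∧ topDiff m ℓ i w < ℓ ∧
      (interDest m ℓ i w < w →
        topDiff m ℓ (interDest m ℓ i w) w < topDiff m ℓ i w) := by
  have hm1 : 1 ≤ m := by omega
  have hi : i < m ^ ℓ := lt_trans hiw hw
  set j := topDiff m ℓ i w with hj
  -- there is a differing digit
  have hex : ∃ t, t ≤ ℓ ∧ digit m t i ≠ digit m t w := by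
    by_contra hc
    push_neg at hc
    have : ∀ t, 0 ≤ t → digit m t i = digit m t w := by
      intro t _
      rcases le_or_gt t ℓ with h | h
      · exact hc t h
      · rw [digit_eq_of_ge m hi (le_of_lt h) hm1, digit_eq_of_ge m hw (le_of_lt h) hm1]
    have := div_pow_eq_of_digit_eq m hm1 hi hw 0 this
    simp at this
    omega
  obtain ⟨t, htℓ, htne⟩ := hex
  have hspec : digit m j i ≠ digit m j w := by
    rw [hj, topDiff]
    exact Nat.findGreatest_spec (P := fun t => digit m t i ≠ digit m t w) htℓ htne
  have hjle : j ≤ ℓ := by rw [hj, topDiff]; exact Nat.findGreatest_le (P := fun t => digit m t i ≠ digit m t w) ℓ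
  have hjlt : j < ℓ := by
    rcases lt_or_eq_of_le hjle with h | h
    · exact h
    · exfalso
      apply hspec
      rw [h, digit_eq_of_ge m hi le_rfl hm1, digit_eq_of_ge m hw le_rfl hm1]
  -- digits above j agree
  have habove : ∀ t, j < t → digit m t i = digit m t w := by
    intro t ht
    rcases le_or_gt t ℓ with h | h
    · by_contra hc
      rw [hj, topDiff] at ht
      exact Nat.findGreatest_is_greatest (P := fun t => digit m t i ≠ digit m t w) ht h hc
    · rw [digit_eq_of_ge m hi (le_of_lt h) hm1, digit_eq_of_ge m hw (le_of_lt h) hm1]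
  have hdiv : i / m ^ (j + 1) = w / m ^ (j + 1) :=
    div_pow_eq_of_digit_eq m hm1 hi hw (j + 1) (fun t ht => habove t (by omega))
  have hpow : 0 < m ^ j := Nat.pow_pos (by omega)
  -- i / m^j < w / m^j
  have hdivne : i / m ^ j ≠ w / m ^ j := by
    rw [div_pow_succ m i j, div_pow_succ m w j, hdiv]
    intro hc
    exact hspec (by omega)
  have hdivlt : i / m ^ j < w / m ^ j := by
    rcases lt_or_ge (i / m ^ j) (w / m ^ j) with h | h
    · exact h
    have h' : w / m ^ j < i / m ^ j := lt_of_le_of_ne h (Ne.symm hdivne)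
    exfalso
    have : (w / m ^ j + 1) * m ^ j ≤ (i / m ^ j) * m ^ j :=
      Nat.mul_le_mul_right _ (by omega)
    have h2 : (i / m ^ j) * m ^ j ≤ i := Nat.div_mul_le_self _ _
    have h3 : w < (w / m ^ j + 1) * m ^ j := lt_div_add_one_mul _ _ hpow
    omega
  have hix : i < interDest m ℓ i w := by
    have h1 : i < (i / m ^ j + 1) * m ^ j := lt_div_add_one_mul _ _ hpow
    have h2 : (i / m ^ j + 1) * m ^ j ≤ (w / m ^ j) * m ^ j :=
      Nat.mul_le_mul_right _ (by omega)
    rw [interDest, ← hj]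
    omega
  have hxw : interDest m ℓ i w ≤ w := Nat.div_mul_le_self _ _
  refine ⟨hix, hxw, hjlt, ?_⟩
  intro hlt
  set x := interDest m ℓ i w with hx
  -- x and w agree at all digits ≥ j
  have hxdiv : x / m ^ j = w / m ^ j := by
    rw [hx, interDest, ← hj, Nat.mul_div_cancel _ hpow]
  have hagree : ∀ t, j ≤ t → digit m t x = digit m t w := by
    intro t ht
    have : x / m ^ t = w / m ^ t := by
      have e : ∀ a : ℕ, a / m ^ t = a / m ^ j / m ^ (t - j) := by
        intro a
        rw [Nat.div_div_eq_div_mul, ← pow_add, Nat.add_sub_cancel' ht]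
      rw [e, e, hxdiv]
    rw [digit, digit, this]
  have hj0 : j ≠ 0 := by
    intro h0
    rw [hx, interDest, ← hj, h0] at hlt
    simp at hlt
  have : topDiff m ℓ x w ≤ j - 1 := by
    by_contra hc
    push_neg at hc
    have hpos : 0 < topDiff m ℓ x w := by omega
    have hP : digit m (topDiff m ℓ x w) x ≠ digit m (topDiff m ℓ x w) w :=
      Nat.findGreatest_of_ne_zero (P := fun t => digit m t x ≠ digit m t w) (n := ℓ) rfl (by omega)
    exact hP (hagree _ (by omega))
  omega

theorem traj_reaches_and_levels_decrease (m ℓ i w : ℕ) (hm : 2 ≤ m) (hℓ : 1 ≤ ℓ)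
    (hiw : i < w) (hw : w < m ^ ℓ) :
    (∃ k, k ≤ ℓ ∧ traj m ℓ w i k = w) ∧
      (∀ k, traj m ℓ w i k < w → traj m ℓ w i (k + 1) < w →
        topDiff m ℓ (traj m ℓ w i (k + 1)) w < topDiff m ℓ (traj m ℓ w i k) w) := by
  have hle : ∀ k, traj m ℓ w i k ≤ w := by
    intro k
    induction k with
    | zero => exact le_of_lt hiw
    | succ k ih =>
      rw [traj]
      split_ifs with h
      · exact (step_facts m ℓ _ w hm h hw).2.1
      · exact ih
  have hdec : ∀ k, traj m ℓ w i k < w → traj m ℓ w i (k + 1) < w →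
      topDiff m ℓ (traj m ℓ w i (k + 1)) w < topDiff m ℓ (traj m ℓ w i k) w := by
    intro k h1 h2
    have e : traj m ℓ w i (k + 1) = interDest m ℓ (traj m ℓ w i k) w := by
      rw [traj, if_pos h1]
    rw [e]
    rw [e] at h2
    exact (step_facts m ℓ _ w hm h1 hw).2.2.2 h2
  refine ⟨?_, hdec⟩
  have hbound : ∀ k, traj m ℓ w i k < w → topDiff m ℓ (traj m ℓ w i k) w + k < ℓ := by
    intro k
    induction k with
    | zero =>
      intro h
      simpa using (step_facts m ℓ _ w hm h hw).2.2.1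
    | succ k ih =>
      intro h2
      have h1 : traj m ℓ w i k < w := by
        by_contra hc
        have : traj m ℓ w i k = w := le_antisymm (hle k) (by omega)
        have : traj m ℓ w i (k + 1) = traj m ℓ w i k := by
          rw [traj, if_neg (by omega)]
        omega
      have := hdec k h1 h2
      have := ih h1
      omega
  refine ⟨ℓ, le_rfl, ?_⟩
  by_contra hc
  have hlt : traj m ℓ w i ℓ < w := lt_of_le_of_ne (hle ℓ) hc
  have := hbound ℓ hlt
  omega
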